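/- For nonnegative integers $p,q$ with $p\ge q\ge n$ and positive integer $n$, $\sum_{k=0}^n(-1)^k\binom{n}{k}\frac{\binom{q+k}{k}}{\binom{q-n+k}{k}}\frac{q}{q+k}H_{p+k}^{\langle4\rangle}=\frac{(-1)^n}{6n}\frac{\binom{p-q+n}{n}}{\binom{p+n}{n}\binom{q}{n}}\Big(S^3+2\big[H_{p-q+n}^{\langle3\rangle}-H_{p+n}^{\langle3\rangle}-H_{p-q}^{\langle3\rangle}+H_p^{\langle3\rangle}\big]-3S\big[H_{p-q+n}^{\langle2\rangle}-H_{p+n}^{\langle2\rangle}-H_{p-q}^{\langle2\rangle}+H_p^{\langle2\rangle}\big]\Big)$, where $S=H_{p-q+n}-H_{p+n}-H_{p-q}+H_p$. -/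

import Mathlib

open Finset

set_option maxHeartbeats 1600000

noncomputable def Hr (l m : ℕ) : ℝ :=
  ∑ k ∈ Finset.range m, 1 / ((k : ℝ) + 1) ^ l

noncomputable def gbinomR (w : ℝ) (k : ℕ) : ℝ :=
  (∏ i ∈ Finset.range k, (w - i)) / (Nat.factorial k)

lemma delta (f : ℕ → ℝ) (n : ℕ) :
    ∑ k ∈ range (n+2), (-1:ℝ)^k * ((n+1).choose k) * f k
      = ∑ k ∈ range (n+1), (-1:ℝ)^k * (n.choose k) * (f k - f (k+1)) := by
  rw [Finset.sum_range_succ' (fun k => (-1:ℝ)^k * ((n+1).choose k) * f k) (n+1)]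
  have h1 : ∑ k ∈ range (n+1), ((-1:ℝ)^(k+1) * ((n+1).choose (k+1)) * f (k+1))
      = ∑ k ∈ range (n+1), ((-1:ℝ)^(k+1) * (n.choose k) * f (k+1)
          + (-1:ℝ)^(k+1) * (n.choose (k+1)) * f (k+1)) := by
    refine Finset.sum_congr rfl fun k _ => ?_
    rw [Nat.choose_succ_succ]
    push_cast
    ring
  have h2 : ∑ k ∈ range (n+1), ((-1:ℝ)^(k+1) * (n.choose (k+1)) * f (k+1))
      = (∑ k ∈ range (n+1), (-1:ℝ)^k * (n.choose k) * f k) - f 0 := by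
    have h3 := Finset.sum_range_succ' (fun k => (-1:ℝ)^k * (n.choose k) * f k) (n+1)
    have h4 : ∑ k ∈ range (n+2), (-1:ℝ)^k * (n.choose k) * f k
        = ∑ k ∈ range (n+1), (-1:ℝ)^k * (n.choose k) * f k := by
      rw [Finset.sum_range_succ]
      simp [Nat.choose_succ_self]
    rw [h4] at h3
    rw [h3]
    simp [Nat.choose_zero_right]
  have h5 : ∑ k ∈ range (n+1), ((-1:ℝ)^(k+1) * (n.choose k) * f (k+1))
      = -∑ k ∈ range (n+1), (-1:ℝ)^k * (n.choose k) * f (k+1) := by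
    rw [← Finset.sum_neg_distrib]
    exact Finset.sum_congr rfl fun k _ => by ring
  have h6 : ∑ k ∈ range (n+1), (-1:ℝ)^k * (n.choose k) * (f k - f (k+1))
      = (∑ k ∈ range (n+1), (-1:ℝ)^k * (n.choose k) * f k)
        - ∑ k ∈ range (n+1), (-1:ℝ)^k * (n.choose k) * f (k+1) := by
    rw [← Finset.sum_sub_distrib]
    exact Finset.sum_congr rfl fun k _ => by ring
  rw [h1, Finset.sum_add_distrib, h2, h5, h6]
  simp [Nat.choose_zero_right]
  ring

lemma master (n : ℕ) : ∀ m q : ℕ,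
    ∑ k ∈ range (n+1), (-1:ℝ)^k * (n.choose k) * ((q+k).choose m)
      = (-1:ℝ)^n * (if n ≤ m then ((q.choose (m-n) : ℕ) : ℝ) else 0) := by
  induction n with
  | zero => intro m q; simp
  | succ n ih =>
    intro m q
    rw [show n+1+1 = n+2 from rfl, delta (fun k => (((q+k).choose m : ℕ) : ℝ)) n]
    cases m with
    | zero =>
      simp only [Nat.choose_zero_right]
      simp
    | succ m =>
      have h : ∀ k, ((((q+k).choose (m+1) : ℕ) : ℝ) - (((q+(k+1)).choose (m+1) : ℕ) : ℝ))
          = -(((q+k).choose m : ℕ) : ℝ) := by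
        intro k
        have e : q+(k+1) = (q+k)+1 := by ring
        rw [e, Nat.choose_succ_succ']
        push_cast
        ring
      have h2 : ∑ k ∈ range (n+1), (-1:ℝ)^k * (n.choose k)
            * ((((q+k).choose (m+1) : ℕ) : ℝ) - (((q+(k+1)).choose (m+1) : ℕ) : ℝ))
          = -∑ k ∈ range (n+1), (-1:ℝ)^k * (n.choose k) * ((q+k).choose m) := by
        rw [← Finset.sum_neg_distrib]
        exact Finset.sum_congr rfl fun k _ => by rw [h k]; ring
      rw [h2, ih m q]
      by_cases hc : n ≤ m
      · rw [if_pos hc, if_pos (by omega : n+1 ≤ m+1)]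
        rw [show m+1-(n+1) = m-n by omega]
        ring
      · rw [if_neg hc, if_neg (by omega : ¬ (n+1 ≤ m+1))]
        ring



lemma swap (N : ℕ) (F : ℕ → ℕ → ℝ) :
    ∑ k ∈ range N, ∑ j ∈ range k, F k j = ∑ j ∈ range N, ∑ k ∈ Ico (j+1) N, F k j := by
  induction N with
  | zero => simp
  | succ N ih =>
    rw [Finset.sum_range_succ, ih, Finset.sum_range_succ (fun j => ∑ k ∈ Ico (j+1) (N+1), F k j)]
    rw [Finset.Ico_self, Finset.sum_empty, add_zero]
    rw [← Finset.sum_add_distrib]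
    refine Finset.sum_congr rfl fun j hj => ?_
    have hj' : j+1 ≤ N := Finset.mem_range.mp hj
    rw [Finset.sum_Ico_succ_top hj' (fun k => F k j)]

lemma Hr_add (l a n : ℕ) : Hr l (a+n) = Hr l a + ∑ i ∈ range n, 1/(((a:ℝ))+i+1)^l := by
  unfold Hr
  rw [Finset.sum_range_add]
  congr 1
  refine Finset.sum_congr rfl fun i _ => ?_
  push_cast
  ring_nf

lemma fact_cast_add (a n : ℕ) : (((a+n).factorial : ℕ) : ℝ)
    = (a.factorial : ℝ) * ∏ i ∈ range n, ((a:ℝ)+i+1) := by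
  induction n with
  | zero => simp
  | succ n ih =>
    rw [show a+(n+1) = (a+n)+1 from rfl, Nat.factorial_succ, Finset.prod_range_succ]
    push_cast [ih]
    ring

lemma choose_cast_prod (a n : ℕ) : (((a+n).choose n : ℕ) : ℝ)
    = (∏ i ∈ range n, ((a:ℝ)+i+1)) / (n.factorial : ℝ) := by
  rw [Nat.cast_choose ℝ (Nat.le_add_left n a), show a+n-n = a by omega, fact_cast_add a n]
  field_simp

lemma fact_pred (q : ℕ) (h : 1 ≤ q) : (q.factorial : ℝ) = q * ((q-1).factorial : ℝ) := by
  obtain ⟨q', rfl⟩ : ∃ q', q = q'+1 := ⟨q-1, by omega⟩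
  rw [Nat.factorial_succ]
  push_cast
  simp

lemma keym0 (P c q v u : ℝ) (hP : P ≠ 0) (hc : c ≠ 0) (hv : v ≠ 0) (hu : u ≠ 0)
    (hvP : v = P + c) (huv : u = v - q) :
    (u/v) * (1/P) = ((c-q)/c)/P + (q/c)/v := by
  subst huv hvP; field_simp; ring

lemma keym1 (P c q v u : ℝ) (hP : P ≠ 0) (hc : c ≠ 0) (hv : v ≠ 0) (hu : u ≠ 0)
    (hvP : v = P + c) (huv : u = v - q) :
    (u/v) * (-(1/P^2) + (1/u - 1/v)/P) = -(((c-q)/c)/P^2) - (q/c)/v^2 := by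
  subst huv hvP; field_simp; ring

lemma keym2 (P c q v u : ℝ) (hP : P ≠ 0) (hc : c ≠ 0) (hv : v ≠ 0) (hu : u ≠ 0)
    (hvP : v = P + c) (huv : u = v - q) :
    (u/v) * (1/P^3 - (1/u - 1/v)/P^2 - (1/v)*(1/u - 1/v)/P) = ((c-q)/c)/P^3 + (q/c)/v^3 := by
  subst huv hvP; field_simp; ring

lemma keym3 (P c q v u : ℝ) (hP : P ≠ 0) (hc : c ≠ 0) (hv : v ≠ 0) (hu : u ≠ 0)
    (hvP : v = P + c) (huv : u = v - q) :
    (u/v) * (-(1/P^4) + (1/u - 1/v)/P^3 + (1/v)*(1/u - 1/v)/P^2 + (1/v)^2*(1/u - 1/v)/P)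
      = -(((c-q)/c)/P^4) - (q/c)/v^4 := by
  subst huv hvP; field_simp; ring

lemma keyc0 (q v u : ℝ) (hv : v ≠ 0) (huv : u = v - q) : u/v = 1 - q/v := by
  subst huv; field_simp

lemma keyc1 (q v u : ℝ) (hv : v ≠ 0) (hu : u ≠ 0) (huv : u = v - q) :
    (u/v) * (1/u - 1/v) = q/v^2 := by
  subst huv; field_simp; ring

lemma keyc2 (q v u : ℝ) (hv : v ≠ 0) (hu : u ≠ 0) (huv : u = v - q) :
    (u/v) * ((1/v)*(1/u - 1/v)) = q/v^3 := by
  subst huv; field_simp; ring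

lemma keyc3 (q v u : ℝ) (hv : v ≠ 0) (hu : u ≠ 0) (huv : u = v - q) :
    (u/v) * ((1/v)^2*(1/u - 1/v)) = q/v^4 := by
  subst huv; field_simp; ring

noncomputable def Acoef (q n i : ℕ) : ℝ :=
  (-1:ℝ)^(n+i) * ((q+i).factorial : ℝ)
    / (((q+i-n).factorial : ℝ) * (i.factorial : ℝ) * ((n-1-i).factorial : ℝ))

noncomputable def tk (q n k : ℕ) : ℝ :=
  (-1:ℝ)^k * (n.choose k) * ((q+k-1).factorial : ℝ) / ((q-n+k).factorial : ℝ)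

lemma Acoef_succ (q n i : ℕ) (hi : i < n) (hq : n + 1 ≤ q) :
    Acoef q (n+1) i = ((((n-i : ℕ)):ℝ) - q)/(((n-i : ℕ)):ℝ) * Acoef q n i := by
  obtain ⟨d, rfl⟩ : ∃ d, n = i + d + 1 := ⟨n-i-1, by omega⟩
  obtain ⟨m, rfl⟩ : ∃ m, q = i + d + 2 + m := ⟨q-(i+d+2), by omega⟩
  unfold Acoef
  simp only [show i+d+2+m+i-(i+d+1) = (i+m)+1 by omega,
    show i+d+2+m+i-(i+d+1+1) = i+m by omega,
    show i+d+1-1-i = d by omega, show i+d+1+1-1-i = d+1 by omega,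
    show i+d+1-i = d+1 by omega, show i+d+1+1+i = (i+d+1+i)+1 by omega,
    Nat.factorial_succ]
  push_cast
  have h1 : ((i:ℝ)+m)+1 ≠ 0 := by positivity
  have h2 : ((d:ℝ)+1) ≠ 0 := by positivity
  have h3 : ((i+m).factorial : ℝ) ≠ 0 := by positivity
  have h4 : (d.factorial : ℝ) ≠ 0 := by positivity
  have h5 : (i.factorial : ℝ) ≠ 0 := by positivity
  field_simp
  ring

lemma Acoef_top (q n : ℕ) (hq : 1 ≤ q) :
    Acoef q (n+1) n = -(q:ℝ) * (((q+n).choose n : ℕ) : ℝ) := by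
  obtain ⟨m, rfl⟩ : ∃ m, q = m + 1 := ⟨q-1, by omega⟩
  unfold Acoef
  rw [Nat.cast_choose ℝ (by omega : n ≤ m+1+n)]
  simp only [show m+1+n-(n+1) = m by omega, show n+1-1-n = 0 by omega,
    show m+1+n-n = m+1 by omega, show (n+1)+n = 2*n+1 by omega, Nat.factorial_succ,
    Nat.factorial_zero]
  push_cast
  have h1 : ((m:ℝ)+1) ≠ 0 := by positivity
  have h3 : ((m).factorial : ℝ) ≠ 0 := by positivity
  have h4 : (n.factorial : ℝ) ≠ 0 := by positivity
  have h5 : ((m+1+n).factorial : ℝ) ≠ 0 := by positivity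
  have hodd : (-1:ℝ)^(2*n+1) = -1 := by
    rw [pow_succ, pow_mul]
    simp
  rw [hodd]
  field_simp

lemma sigma_aux (q n i : ℕ) (hi : i < n) (hq : n ≤ q) :
    Acoef q n i / (((n-i : ℕ)):ℝ)
      = (-1:ℝ)^(n+i) * ((n.choose i : ℕ):ℝ) * (((q+i).choose n : ℕ):ℝ) := by
  obtain ⟨d, rfl⟩ : ∃ d, n = i + d + 1 := ⟨n-i-1, by omega⟩
  obtain ⟨m, rfl⟩ : ∃ m, q = i + d + 1 + m := ⟨q-(i+d+1), by omega⟩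
  unfold Acoef
  rw [Nat.cast_choose ℝ (by omega : i ≤ i+d+1), Nat.cast_choose ℝ (by omega : i+d+1 ≤ i+d+1+m+i)]
  simp only [show i+d+1+m+i-(i+d+1) = i+m by omega, show i+d+1-1-i = d by omega,
    show i+d+1-i = d+1 by omega, Nat.factorial_succ]
  push_cast
  have h2 : ((d:ℝ)+1) ≠ 0 := by positivity
  have h3 : ((i+m).factorial : ℝ) ≠ 0 := by positivity
  have h4 : (d.factorial : ℝ) ≠ 0 := by positivity
  have h5 : (i.factorial : ℝ) ≠ 0 := by positivity
  have h6 : ((i+d+1).factorial : ℝ) ≠ 0 := by positivity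
  field_simp

lemma sigma (q n : ℕ) (hq : n ≤ q) :
    ∑ i ∈ range n, Acoef q n i / (((n-i : ℕ)):ℝ) = 1 - (((q+n).choose n : ℕ):ℝ) := by
  have hm := master n n q
  rw [if_pos (le_refl n), Nat.sub_self, Nat.choose_zero_right] at hm
  have hm2 : ∑ k ∈ range (n+1), (-1:ℝ)^(n+k) * (n.choose k) * ((q+k).choose n)
      = 1 := by
    have : ∑ k ∈ range (n+1), (-1:ℝ)^(n+k) * (n.choose k) * ((q+k).choose n)
        = (-1:ℝ)^n * ∑ k ∈ range (n+1), (-1:ℝ)^k * (n.choose k) * ((q+k).choose n) := by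
      rw [Finset.mul_sum]
      exact Finset.sum_congr rfl fun k _ => by rw [pow_add]; ring
    rw [this, hm]
    simp [← pow_add, ← two_mul, pow_mul]
  rw [Finset.sum_range_succ] at hm2
  have hlast : (-1:ℝ)^(n+n) * (n.choose n) * ((q+n).choose n) = (((q+n).choose n : ℕ):ℝ) := by
    simp [← two_mul, pow_mul]
  rw [hlast] at hm2
  have : ∑ i ∈ range n, Acoef q n i / (((n-i : ℕ)):ℝ)
      = ∑ k ∈ range n, (-1:ℝ)^(n+k) * (n.choose k) * ((q+k).choose n) :=
    Finset.sum_congr rfl fun i hi => sigma_aux q n i (Finset.mem_range.mp hi) hq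
  rw [this]
  linarith

lemma tk_eq (q n k : ℕ) (hn : 1 ≤ n) (hq : n ≤ q) :
    tk q n k = ((n-1).factorial : ℝ)
      * ((-1:ℝ)^k * (n.choose k) * (((q-1+k).choose (n-1) : ℕ):ℝ)) := by
  obtain ⟨N, rfl⟩ : ∃ N, n = N + 1 := ⟨n-1, by omega⟩
  obtain ⟨m, rfl⟩ : ∃ m, q = N + 1 + m := ⟨q-(N+1), by omega⟩
  unfold tk
  simp only [show N+1+m+k-1 = N+m+k by omega, show N+1+m-1+k = N+m+k by omega,
    show N+1+m-(N+1)+k = m+k by omega, show N+1-1 = N by omega]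
  rw [Nat.cast_choose ℝ (by omega : N ≤ N+m+k), show N+m+k-N = m+k by omega]
  have h3 : ((m+k).factorial : ℝ) ≠ 0 := by positivity
  have h4 : (N.factorial : ℝ) ≠ 0 := by positivity
  field_simp

lemma vanish (q n : ℕ) (hn : 1 ≤ n) (hq : n ≤ q) :
    ∑ k ∈ range (n+1), tk q n k = 0 := by
  have hm := master n (n-1) (q-1)
  rw [if_neg (by omega)] at hm
  have : ∑ k ∈ range (n+1), tk q n k
      = ((n-1).factorial : ℝ) * ∑ k ∈ range (n+1), (-1:ℝ)^k * (n.choose k) * ((q-1+k).choose (n-1)) := by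
    rw [Finset.mul_sum]
    exact Finset.sum_congr rfl fun k _ => tk_eq q n k hn hq
  rw [this, hm]
  ring

lemma presum (q n : ℕ) (hn : 1 ≤ n) (hq : n ≤ q) :
    ∀ j, j < n → ∑ k ∈ range (j+1), tk q n k
      = (-1:ℝ)^j * ((n-1).factorial : ℝ) * ((q+j).factorial : ℝ)
        / ((q:ℝ) * ((q+j-n).factorial : ℝ) * (j.factorial : ℝ) * ((n-1-j).factorial : ℝ)) := by
  intro j
  induction j with
  | zero =>
    intro _
    rw [Finset.sum_range_one]
    unfold tk
    obtain ⟨N, rfl⟩ : ∃ N, n = N + 1 := ⟨n-1, by omega⟩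
    obtain ⟨m, rfl⟩ : ∃ m, q = N + 1 + m := ⟨q-(N+1), by omega⟩
    simp only [show N+1+m+0-1 = N+m by omega, show N+1+m-(N+1)+0 = m by omega,
      show N+1+m+0-(N+1) = m by omega, show N+1-1 = N by omega, show N+1+m+0 = (N+m)+1 by omega,
      Nat.factorial_succ, Nat.choose_zero_right, Nat.factorial_zero]
    push_cast
    have h1 : ((N:ℝ)+1+m) ≠ 0 := by positivity
    have h3 : ((N+m).factorial : ℝ) ≠ 0 := by positivity
    have h4 : (N.factorial : ℝ) ≠ 0 := by positivity
    have h5 : ((m).factorial : ℝ) ≠ 0 := by positivity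
    simp only [Nat.add_sub_cancel_left, Nat.sub_zero]
    field_simp
    ring
  | succ j ih =>
    intro hj
    rw [Finset.sum_range_succ, ih (by omega)]
    obtain ⟨d, rfl⟩ : ∃ d, n = j + d + 2 := ⟨n-j-2, by omega⟩
    obtain ⟨m, rfl⟩ : ∃ m, q = j + d + 2 + m := ⟨q-(j+d+2), by omega⟩
    unfold tk
    rw [Nat.cast_choose ℝ (by omega : j+1 ≤ j+d+2)]
    rw [show j+d+2+m+(j+1)-1 = j+d+2+m+j by omega]
    rw [show j+d+2+m-(j+d+2)+(j+1) = (j+m)+1 by omega]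
    rw [show j+d+2+m+j-(j+d+2) = j+m by omega]
    rw [show j+d+2+m+(j+1)-(j+d+2) = (j+m)+1 by omega]
    rw [show j+d+2+m+(j+1) = (j+d+2+m+j)+1 by omega]
    rw [show j+d+2-1-(j+1) = d by omega]
    rw [show j+d+2-1-j = d+1 by omega]
    rw [show j+d+2-(j+1) = d+1 by omega]
    rw [show j+d+2-1 = j+d+1 by omega]
    rw [show j+d+2 = (j+d+1)+1 by omega]
    simp only [Nat.factorial_succ]
    push_cast
    have h1 : ((j:ℝ)+d+1+1+m) ≠ 0 := by positivity
    have h2 : ((j:ℝ)+m+1) ≠ 0 := by positivity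
    have h3 : ((j+m).factorial : ℝ) ≠ 0 := by positivity
    have h4 : ((d).factorial : ℝ) ≠ 0 := by positivity
    have h5 : ((j).factorial : ℝ) ≠ 0 := by positivity
    have h7 : ((j+d+1).factorial : ℝ) ≠ 0 := by positivity
    have h8 : ((d:ℝ)+1) ≠ 0 := by positivity
    have h9 : ((j:ℝ)+1) ≠ 0 := by positivity
    field_simp
    ring



noncomputable def pls (a p l n : ℕ) : ℝ :=
  ∑ i ∈ range n, (1/((a:ℝ)+i+1)^l - 1/((p:ℝ)+i+1)^l)

noncomputable def Phi (a p n : ℕ) : ℝ := ∏ i ∈ range n, (((a:ℝ)+i+1)/((p:ℝ)+i+1))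

noncomputable def Sm (q p n m : ℕ) : ℝ := ∑ i ∈ range n, Acoef q n i/((p:ℝ)+i+1)^m








lemma pls_succ (a p l n : ℕ) : pls a p l (n+1)
    = pls a p l n + (1/((a:ℝ)+(n:ℝ)+1)^l - 1/((p:ℝ)+(n:ℝ)+1)^l) := by
  unfold pls; rw [Finset.sum_range_succ]

lemma Phi_succ (a p n : ℕ) : Phi a p (n+1)
    = Phi a p n * (((a:ℝ)+(n:ℝ)+1)/((p:ℝ)+(n:ℝ)+1)) := by
  unfold Phi; rw [Finset.prod_range_succ]

lemma Sm_succ (q p n m : ℕ) : Sm q p (n+1) m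
    = (∑ i ∈ range n, Acoef q (n+1) i/((p:ℝ)+i+1)^m) + Acoef q (n+1) n/((p:ℝ)+(n:ℝ)+1)^m := by
  unfold Sm; rw [Finset.sum_range_succ]

section steps
variable (q p n : ℕ) (hq : n+1 ≤ q) (v : ℝ) (hvdef : v = (p:ℝ)+(n:ℝ)+1) (hu : v - q ≠ 0)

private lemma hvne (hvdef : v = (p:ℝ)+(n:ℝ)+1) : v ≠ 0 := by
  rw [hvdef]; positivity

private lemma perhyp (i : ℕ) (hi : i < n) (hvdef : v = (p:ℝ)+(n:ℝ)+1) :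
    ((p:ℝ)+i+1) ≠ 0 ∧ (((n-i : ℕ)):ℝ) ≠ 0 ∧ v = ((p:ℝ)+i+1) + (((n-i : ℕ)):ℝ) := by
  refine ⟨by positivity, Nat.cast_ne_zero.2 (by omega), ?_⟩
  rw [hvdef]
  push_cast [Nat.cast_sub hi.le]
  ring

include hq hvdef hu in
lemma sum_step1 :
    ((v-q)/v) * (Sm q p n 2 - (1/(v-q) - 1/v) * Sm q p n 1)
      = (∑ i ∈ range n, Acoef q (n+1) i/((p:ℝ)+i+1)^2)
        + (q/v^2) * (1 - (((q+n).choose n : ℕ):ℝ)) := by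
  have hv : v ≠ 0 := by rw [hvdef]; positivity
  unfold Sm
  calc ((v-q)/v) * ((∑ i ∈ range n, Acoef q n i/((p:ℝ)+i+1)^2)
          - (1/(v-q) - 1/v) * ∑ i ∈ range n, Acoef q n i/((p:ℝ)+i+1)^1)
      = ∑ i ∈ range n, ((v-q)/v) * (Acoef q n i/((p:ℝ)+i+1)^2
          - (1/(v-q) - 1/v) * (Acoef q n i/((p:ℝ)+i+1)^1)) := by
        simp only [Finset.mul_sum, ← Finset.sum_sub_distrib]
    _ = ∑ i ∈ range n, (Acoef q (n+1) i/((p:ℝ)+i+1)^2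
          + (q/v^2) * (Acoef q n i / (((n-i : ℕ)):ℝ))) := by
        refine Finset.sum_congr rfl fun i hi => ?_
        obtain ⟨hP, hc, hvP⟩ := perhyp p n v i (Finset.mem_range.mp hi) hvdef
        have hk := keym1 ((p:ℝ)+i+1) (((n-i : ℕ)):ℝ) q v (v-q) hP hc hv hu hvP rfl
        rw [Acoef_succ q n i (Finset.mem_range.mp hi) hq]
        linear_combination (-(Acoef q n i)) * hk
    _ = _ := by
        rw [Finset.sum_add_distrib, ← Finset.mul_sum, sigma q n (by omega)]

include hq hvdef hu in
lemma sum_step2 :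
    ((v-q)/v) * (Sm q p n 3 - (1/(v-q) - 1/v) * Sm q p n 2 - (1/v)*(1/(v-q) - 1/v) * Sm q p n 1)
      = (∑ i ∈ range n, Acoef q (n+1) i/((p:ℝ)+i+1)^3)
        + (q/v^3) * (1 - (((q+n).choose n : ℕ):ℝ)) := by
  have hv : v ≠ 0 := by rw [hvdef]; positivity
  unfold Sm
  calc ((v-q)/v) * ((∑ i ∈ range n, Acoef q n i/((p:ℝ)+i+1)^3)
          - (1/(v-q) - 1/v) * ∑ i ∈ range n, Acoef q n i/((p:ℝ)+i+1)^2
          - (1/v)*(1/(v-q) - 1/v) * ∑ i ∈ range n, Acoef q n i/((p:ℝ)+i+1)^1)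
      = ∑ i ∈ range n, ((v-q)/v) * (Acoef q n i/((p:ℝ)+i+1)^3
          - (1/(v-q) - 1/v) * (Acoef q n i/((p:ℝ)+i+1)^2)
          - (1/v)*(1/(v-q) - 1/v) * (Acoef q n i/((p:ℝ)+i+1)^1)) := by
        simp only [Finset.mul_sum, ← Finset.sum_sub_distrib]
    _ = ∑ i ∈ range n, (Acoef q (n+1) i/((p:ℝ)+i+1)^3
          + (q/v^3) * (Acoef q n i / (((n-i : ℕ)):ℝ))) := by
        refine Finset.sum_congr rfl fun i hi => ?_
        obtain ⟨hP, hc, hvP⟩ := perhyp p n v i (Finset.mem_range.mp hi) hvdef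
        have hk := keym2 ((p:ℝ)+i+1) (((n-i : ℕ)):ℝ) q v (v-q) hP hc hv hu hvP rfl
        rw [Acoef_succ q n i (Finset.mem_range.mp hi) hq]
        linear_combination (Acoef q n i) * hk
    _ = _ := by
        rw [Finset.sum_add_distrib, ← Finset.mul_sum, sigma q n (by omega)]

include hq hvdef hu in
lemma sum_step3 :
    ((v-q)/v) * (Sm q p n 4 - (1/(v-q) - 1/v) * Sm q p n 3 - (1/v)*(1/(v-q) - 1/v) * Sm q p n 2
        - (1/v)^2*(1/(v-q) - 1/v) * Sm q p n 1)
      = (∑ i ∈ range n, Acoef q (n+1) i/((p:ℝ)+i+1)^4)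
        + (q/v^4) * (1 - (((q+n).choose n : ℕ):ℝ)) := by
  have hv : v ≠ 0 := by rw [hvdef]; positivity
  unfold Sm
  calc ((v-q)/v) * ((∑ i ∈ range n, Acoef q n i/((p:ℝ)+i+1)^4)
          - (1/(v-q) - 1/v) * ∑ i ∈ range n, Acoef q n i/((p:ℝ)+i+1)^3
          - (1/v)*(1/(v-q) - 1/v) * ∑ i ∈ range n, Acoef q n i/((p:ℝ)+i+1)^2
          - (1/v)^2*(1/(v-q) - 1/v) * ∑ i ∈ range n, Acoef q n i/((p:ℝ)+i+1)^1)
      = ∑ i ∈ range n, ((v-q)/v) * (Acoef q n i/((p:ℝ)+i+1)^4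
          - (1/(v-q) - 1/v) * (Acoef q n i/((p:ℝ)+i+1)^3)
          - (1/v)*(1/(v-q) - 1/v) * (Acoef q n i/((p:ℝ)+i+1)^2)
          - (1/v)^2*(1/(v-q) - 1/v) * (Acoef q n i/((p:ℝ)+i+1)^1)) := by
        simp only [Finset.mul_sum, ← Finset.sum_sub_distrib]
    _ = ∑ i ∈ range n, (Acoef q (n+1) i/((p:ℝ)+i+1)^4
          + (q/v^4) * (Acoef q n i / (((n-i : ℕ)):ℝ))) := by
        refine Finset.sum_congr rfl fun i hi => ?_
        obtain ⟨hP, hc, hvP⟩ := perhyp p n v i (Finset.mem_range.mp hi) hvdef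
        have hk := keym3 ((p:ℝ)+i+1) (((n-i : ℕ)):ℝ) q v (v-q) hP hc hv hu hvP rfl
        rw [Acoef_succ q n i (Finset.mem_range.mp hi) hq]
        linear_combination (-(Acoef q n i)) * hk
    _ = _ := by
        rw [Finset.sum_add_distrib, ← Finset.mul_sum, sigma q n (by omega)]

include hq hvdef hu in
lemma sum_step0 :
    ((v-q)/v) * (Sm q p n 1)
      = (∑ i ∈ range n, Acoef q (n+1) i/((p:ℝ)+i+1)^1)
        + (q/v) * (1 - (((q+n).choose n : ℕ):ℝ)) := by
  have hv : v ≠ 0 := by rw [hvdef]; positivity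
  unfold Sm
  calc ((v-q)/v) * (∑ i ∈ range n, Acoef q n i/((p:ℝ)+i+1)^1)
      = ∑ i ∈ range n, ((v-q)/v) * (Acoef q n i/((p:ℝ)+i+1)^1) := by
        simp only [Finset.mul_sum]
    _ = ∑ i ∈ range n, (Acoef q (n+1) i/((p:ℝ)+i+1)^1
          + (q/v) * (Acoef q n i / (((n-i : ℕ)):ℝ))) := by
        refine Finset.sum_congr rfl fun i hi => ?_
        obtain ⟨hP, hc, hvP⟩ := perhyp p n v i (Finset.mem_range.mp hi) hvdef
        have hk := keym0 ((p:ℝ)+i+1) (((n-i : ℕ)):ℝ) q v (v-q) hP hc hv hu hvP rfl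
        rw [Acoef_succ q n i (Finset.mem_range.mp hi) hq]
        linear_combination (Acoef q n i) * hk
    _ = _ := by
        rw [Finset.sum_add_distrib, ← Finset.mul_sum, sigma q n (by omega)]

end steps

lemma Dall (a p q : ℕ) (hap : a + q = p) (hq1 : 1 ≤ q) : ∀ n : ℕ, n ≤ q →
    (Phi a p n = 1 + Sm q p n 1)
  ∧ (pls a p 1 n * Phi a p n = - Sm q p n 2)
  ∧ ((pls a p 1 n^2 - pls a p 2 n) * Phi a p n = 2 * Sm q p n 3)
  ∧ ((pls a p 1 n^3 - 3*pls a p 1 n*pls a p 2 n + 2*pls a p 3 n) * Phi a p n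
      = -6 * Sm q p n 4) := by
  intro n
  induction n with
  | zero =>
    intro _
    unfold Phi pls Sm
    simp
  | succ n ih =>
    intro hn1
    obtain ⟨h0, h1, h2, h3⟩ := ih (by omega)
    have hacast : (a:ℝ) + q = p := by exact_mod_cast congrArg (Nat.cast : ℕ → ℝ) hap
    obtain ⟨v, hvdef⟩ : ∃ v : ℝ, v = (p:ℝ)+(n:ℝ)+1 := ⟨_, rfl⟩
    obtain ⟨u, hu2⟩ : ∃ u : ℝ, u = v - q := ⟨_, rfl⟩
    have hudef : (a:ℝ)+(n:ℝ)+1 = u := by rw [hu2, hvdef]; linarith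
    have hv : v ≠ 0 := by rw [hvdef]; positivity
    have hu : v - (q:ℝ) ≠ 0 := by
      rw [← hu2, ← hudef]; positivity
    have hune : u ≠ 0 := by rw [hu2]; exact hu
    have hs0 := sum_step0 q p n hn1 v hvdef hu
    have hs1 := sum_step1 q p n hn1 v hvdef hu
    have hs2 := sum_step2 q p n hn1 v hvdef hu
    have hs3 := sum_step3 q p n hn1 v hvdef hu
    rw [← hu2] at hs0 hs1 hs2 hs3
    have htop := Acoef_top q n hq1
    have hc1 : (u/v) * (1/u - 1/v) = q/v^2 := by
      rw [hu2]; field_simp; ring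
    have hc2 : (u/v) * ((1/v)*(1/u - 1/v)) = q/v^3 := by
      rw [hu2]; field_simp; ring
    have hc3 : (u/v) * ((1/v)^2*(1/u - 1/v)) = q/v^4 := by
      rw [hu2]; field_simp; ring
    have hc0 : u/v = 1 - q/v := by rw [hu2]; field_simp
    refine ⟨?_, ?_, ?_, ?_⟩
    · -- D0
      rw [Phi_succ, Sm_succ, hudef, ← hvdef, htop]
      linear_combination (u/v)*h0 + hs0 + hc0
    · -- D1
      rw [pls_succ, Phi_succ, Sm_succ, hudef, ← hvdef, htop]
      linear_combination (u/v)*h1 + (1/u - 1/v)*(u/v)*h0 - hs1 + hc1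
    · -- D2
      rw [pls_succ, pls_succ, Phi_succ, Sm_succ, hudef, ← hvdef, htop]
      linear_combination (u/v)*h2 + 2*(1/u - 1/v)*(u/v)*h1
        - (2/v)*(1/u - 1/v)*(u/v)*h0 + 2*hs2 - 2*hc2
    · -- D3
      rw [pls_succ, pls_succ, pls_succ, Phi_succ, Sm_succ, hudef, ← hvdef, htop]
      linear_combination (u/v)*h3 + 3*(1/u - 1/v)*(u/v)*h2
        - (6/v)*(1/u - 1/v)*(u/v)*h1
        + (6/v^2)*(1/u - 1/v)*(u/v)*h0 - 6*hs3 + 6*hc3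



lemma perk (q n k : ℕ) (hn : 1 ≤ n) (hq : n ≤ q) :
    (((q+k).choose k : ℕ):ℝ)/(((q-n+k).choose k : ℕ):ℝ) * ((q:ℝ)/((q:ℝ)+k))
      = ((q-n).factorial : ℝ)/((q-1).factorial : ℝ)
        * (((q+k-1).factorial : ℝ)/((q-n+k).factorial : ℝ)) := by
  obtain ⟨N, rfl⟩ : ∃ N, n = N + 1 := ⟨n-1, by omega⟩
  obtain ⟨m, rfl⟩ : ∃ m, q = N + 1 + m := ⟨q-(N+1), by omega⟩
  rw [Nat.cast_choose ℝ (by omega : k ≤ N+1+m+k), Nat.cast_choose ℝ (by omega : k ≤ N+1+m-(N+1)+k)]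
  rw [show N+1+m+k-k = (N+m)+1 by omega]
  rw [show N+1+m-(N+1)+k = m+k by omega]
  rw [show N+1+m-(N+1) = m by omega]
  rw [show m+k-k = m by omega]
  rw [show N+1+m+k-1 = N+m+k by omega]
  rw [show N+1+m+k = (N+m+k)+1 by omega]
  rw [show N+1+m-1 = N+m by omega]
  simp only [Nat.factorial_succ]
  push_cast
  have h0 : ((N:ℝ)+1+m) ≠ 0 := by positivity
  have h1 : ((N:ℝ)+1+m+k) ≠ 0 := by positivity
  have h2 : ((N:ℝ)+m+k+1) ≠ 0 := by positivity
  have h3 : ((N+m+k).factorial : ℝ) ≠ 0 := by positivity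
  have h4 : ((N+m).factorial : ℝ) ≠ 0 := by positivity
  have h5 : ((m+k).factorial : ℝ) ≠ 0 := by positivity
  have h6 : ((m).factorial : ℝ) ≠ 0 := by positivity
  have h7 : ((k).factorial : ℝ) ≠ 0 := by positivity
  field_simp
  ring

lemma perj (q n j : ℕ) (hj : j < n) (hq : n ≤ q) :
    -(((q-n).factorial : ℝ)/((q-1).factorial : ℝ)
        * ((-1:ℝ)^j * ((n-1).factorial : ℝ) * ((q+j).factorial : ℝ)
          / ((q:ℝ) * ((q+j-n).factorial : ℝ) * (j.factorial : ℝ) * ((n-1-j).factorial : ℝ))))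
      = (-1:ℝ)^(n+1) * Acoef q n j / ((n:ℝ) * ((q.choose n : ℕ):ℝ)) := by
  obtain ⟨d, rfl⟩ : ∃ d, n = j + d + 1 := ⟨n-j-1, by omega⟩
  obtain ⟨m, rfl⟩ : ∃ m, q = j + d + 1 + m := ⟨q-(j+d+1), by omega⟩
  unfold Acoef
  rw [Nat.cast_choose ℝ (by omega : j+d+1 ≤ j+d+1+m)]
  rw [show j+d+1+m-(j+d+1) = m by omega]
  rw [show j+d+1+m+j-(j+d+1) = j+m by omega]
  rw [show j+d+1-1-j = d by omega]
  rw [show j+d+1-1 = j+d by omega]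
  rw [show j+d+1+m-1 = j+d+m by omega]
  rw [show j+d+1+m = (j+d+m)+1 by omega]
  have hfs : (j+d+1).factorial = (j+d+1) * (j+d).factorial := Nat.factorial_succ _
  rcases Nat.even_or_odd d with ⟨t, rfl⟩ | ⟨t, rfl⟩
  · have s1 : (-1:ℝ)^(j+(t+t)+1+1) = (-1:ℝ)^j := by
      rw [show j+(t+t)+1+1 = 2*(t+1)+j by ring, pow_add, pow_mul]; simp
    have s2 : (-1:ℝ)^(j+(t+t)+1+j) = -1 := by
      rw [show j+(t+t)+1+j = 2*(j+t)+1 by ring, pow_add, pow_mul]; simp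
    rw [s1, s2, hfs]
    simp only [Nat.factorial_succ]
    push_cast
    have h0 : ((j:ℝ)+(t+t)+m+1) ≠ 0 := by positivity
    have h1 : ((j:ℝ)+(t+t)+1) ≠ 0 := by positivity
    have h3 : ((j+(t+t)+m).factorial : ℝ) ≠ 0 := by positivity
    have h4 : ((j+(t+t)).factorial : ℝ) ≠ 0 := by positivity
    have h5 : ((j+m).factorial : ℝ) ≠ 0 := by positivity
    have h6 : ((m).factorial : ℝ) ≠ 0 := by positivity
    have h7 : ((j).factorial : ℝ) ≠ 0 := by positivity
    have h8 : (((t+t)).factorial : ℝ) ≠ 0 := by positivity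
    field_simp
  · have s1 : (-1:ℝ)^(j+(2*t+1)+1+1) = -(-1:ℝ)^j := by
      rw [show j+(2*t+1)+1+1 = 2*(t+1)+(j+1) by ring, pow_add, pow_mul]
      simp [pow_succ]
    have s2 : (-1:ℝ)^(j+(2*t+1)+1+j) = 1 := by
      rw [show j+(2*t+1)+1+j = 2*(j+t+1) by ring, pow_mul]; simp
    rw [s1, s2, hfs]
    simp only [Nat.factorial_succ]
    push_cast
    have h0 : ((j:ℝ)+(2*t+1)+m+1) ≠ 0 := by positivity
    have h1 : ((j:ℝ)+(2*t+1)+1) ≠ 0 := by positivity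
    have h3 : ((j+(2*t+1)+m).factorial : ℝ) ≠ 0 := by positivity
    have h4 : ((j+(2*t+1)).factorial : ℝ) ≠ 0 := by positivity
    have h5 : ((j+m).factorial : ℝ) ≠ 0 := by positivity
    have h6 : ((m).factorial : ℝ) ≠ 0 := by positivity
    have h7 : ((j).factorial : ℝ) ≠ 0 := by positivity
    have h8 : (((2*t+1)).factorial : ℝ) ≠ 0 := by positivity
    field_simp

theorem stmt16 (p q n : ℕ) (hn : 0 < n) (hqn : n ≤ q) (hpq : q ≤ p) :
    ∑ k ∈ Finset.range (n + 1), (-1 : ℝ) ^ k * (n.choose k : ℝ) *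
        (((q + k).choose k : ℝ) / ((q - n + k).choose k : ℝ)) *
        ((q : ℝ) / ((q : ℝ) + k)) * Hr 4 (p + k) =
      (-1 : ℝ) ^ n / (6 * n) *
        (((p - q + n).choose n : ℝ) / (((p + n).choose n : ℝ) * (q.choose n : ℝ))) *
        ((Hr 1 (p - q + n) - Hr 1 (p + n) - Hr 1 (p - q) + Hr 1 p) ^ 3 +
          2 * (Hr 3 (p - q + n) - Hr 3 (p + n) - Hr 3 (p - q) + Hr 3 p) -
          3 * (Hr 1 (p - q + n) - Hr 1 (p + n) - Hr 1 (p - q) + Hr 1 p) *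
            (Hr 2 (p - q + n) - Hr 2 (p + n) - Hr 2 (p - q) + Hr 2 p)) := by
  have hn1 : 1 ≤ n := hn
  have hq1 : 1 ≤ q := le_trans hn1 hqn
  set a := p - q with ha
  have hap : a + q = p := Nat.sub_add_cancel hpq
  have hCqne : ((q.choose n : ℕ):ℝ) ≠ 0 := by
    exact_mod_cast (Nat.choose_pos hqn).ne'
  have hnne : (n:ℝ) ≠ 0 := Nat.cast_ne_zero.2 (by omega)
  -- LHS reduction
  have hL1 : ∑ k ∈ Finset.range (n + 1), (-1 : ℝ) ^ k * (n.choose k : ℝ) *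
        (((q + k).choose k : ℝ) / ((q - n + k).choose k : ℝ)) *
        ((q : ℝ) / ((q : ℝ) + k)) * Hr 4 (p + k)
      = ((((q-n).factorial : ℝ)/((q-1).factorial : ℝ)) * Hr 4 p) * (∑ k ∈ range (n+1), tk q n k)
        + ∑ k ∈ range (n+1), ∑ i ∈ range k,
            (((q-n).factorial : ℝ)/((q-1).factorial : ℝ)) * tk q n k * (1/((p:ℝ)+(i:ℝ)+1)^4) := by
    rw [Finset.mul_sum, ← Finset.sum_add_distrib]
    refine Finset.sum_congr rfl fun k _ => ?_
    rw [← Finset.mul_sum]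
    have hH := Hr_add 4 p k
    have hperk := perk q n k hn1 hqn
    unfold tk
    linear_combination ((-1:ℝ)^k * (n.choose k : ℝ) * Hr 4 (p+k)) * hperk
      + ((((q-n).factorial : ℝ)/((q-1).factorial : ℝ))
          * ((-1:ℝ)^k * (n.choose k : ℝ) * ((q+k-1).factorial : ℝ) / ((q-n+k).factorial : ℝ))) * hH
  have hswap := swap (n+1) (fun k i =>
    (((q-n).factorial : ℝ)/((q-1).factorial : ℝ)) * tk q n k * (1/((p:ℝ)+(i:ℝ)+1)^4))
  have htail : ∀ j, j < n → ∑ k ∈ Finset.Ico (j+1) (n+1), tk q n k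
      = -(∑ k ∈ range (j+1), tk q n k) := by
    intro j hj
    have hsplit := Finset.sum_Ico_consecutive (tk q n)
      (Nat.zero_le (j+1)) (by omega : j+1 ≤ n+1)
    rw [← Finset.range_eq_Ico, ← Finset.range_eq_Ico] at hsplit
    have hvan := vanish q n hn1 hqn
    linarith [hsplit, hvan]
  have hperj : ∀ j ∈ range n,
      ∑ k ∈ Finset.Ico (j+1) (n+1),
          (((q-n).factorial : ℝ)/((q-1).factorial : ℝ)) * tk q n k * (1/((p:ℝ)+(j:ℝ)+1)^4)
        = ((-1:ℝ)^(n+1) * Acoef q n j / ((n:ℝ) * ((q.choose n : ℕ):ℝ))) * (1/((p:ℝ)+(j:ℝ)+1)^4) := by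
    intro j hj
    have hj' : j < n := Finset.mem_range.mp hj
    have hinner : ∑ k ∈ Finset.Ico (j+1) (n+1),
          (((q-n).factorial : ℝ)/((q-1).factorial : ℝ)) * tk q n k * (1/((p:ℝ)+(j:ℝ)+1)^4)
        = (∑ k ∈ Finset.Ico (j+1) (n+1), tk q n k)
          * ((((q-n).factorial : ℝ)/((q-1).factorial : ℝ)) * (1/((p:ℝ)+(j:ℝ)+1)^4)) := by
      rw [Finset.sum_mul]
      exact Finset.sum_congr rfl fun k _ => by ring
    rw [hinner, htail j hj', presum q n hn1 hqn j hj']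
    have hpj := perj q n j hj' hqn
    linear_combination (1/((p:ℝ)+(j:ℝ)+1)^4) * hpj
  -- RHS reduction
  obtain ⟨h0, h1, h2, h3⟩ := Dall a p q hap hq1 n hqn
  have hHr : ∀ l, Hr l (a+n) - Hr l (p+n) - Hr l a + Hr l p = pls a p l n := by
    intro l
    rw [Hr_add l a n, Hr_add l p n]
    unfold pls
    rw [Finset.sum_sub_distrib]
    ring
  have hprodne : (∏ i ∈ range n, ((p:ℝ)+(i:ℝ)+1)) ≠ 0 := by
    apply Finset.prod_ne_zero_iff.mpr
    intro i _
    positivity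
  have hch : (((a+n).choose n : ℕ):ℝ) / ((((p+n).choose n : ℕ):ℝ) * ((q.choose n : ℕ):ℝ))
      = Phi a p n / ((q.choose n : ℕ):ℝ) := by
    rw [choose_cast_prod a n, choose_cast_prod p n]
    unfold Phi
    rw [Finset.prod_div_distrib]
    have hfne : ((n.factorial : ℕ):ℝ) ≠ 0 := by positivity
    field_simp
  have hRHS : (-1 : ℝ) ^ n / (6 * n) *
        (((a + n).choose n : ℝ) / (((p + n).choose n : ℝ) * (q.choose n : ℝ))) *
        ((Hr 1 (a + n) - Hr 1 (p + n) - Hr 1 a + Hr 1 p) ^ 3 +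
          2 * (Hr 3 (a + n) - Hr 3 (p + n) - Hr 3 a + Hr 3 p) -
          3 * (Hr 1 (a + n) - Hr 1 (p + n) - Hr 1 a + Hr 1 p) *
            (Hr 2 (a + n) - Hr 2 (p + n) - Hr 2 a + Hr 2 p))
      = ∑ j ∈ range n, ((-1:ℝ)^(n+1) * Acoef q n j / ((n:ℝ) * ((q.choose n : ℕ):ℝ)))
          * (1/((p:ℝ)+(j:ℝ)+1)^4) := by
    rw [hHr 1, hHr 2, hHr 3, hch]
    have hexp : ∑ j ∈ range n, ((-1:ℝ)^(n+1) * Acoef q n j / ((n:ℝ) * ((q.choose n : ℕ):ℝ)))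
          * (1/((p:ℝ)+(j:ℝ)+1)^4)
        = ((-1:ℝ)^(n+1) / ((n:ℝ) * ((q.choose n : ℕ):ℝ))) * Sm q p n 4 := by
      unfold Sm
      rw [Finset.mul_sum]
      exact Finset.sum_congr rfl fun j _ => by ring
    rw [hexp]
    linear_combination ((-1:ℝ)^n/(6*(n:ℝ)*((q.choose n : ℕ):ℝ))) * h3
  calc ∑ k ∈ Finset.range (n + 1), (-1 : ℝ) ^ k * (n.choose k : ℝ) *
        (((q + k).choose k : ℝ) / ((q - n + k).choose k : ℝ)) *
        ((q : ℝ) / ((q : ℝ) + k)) * Hr 4 (p + k)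
      = ((((q-n).factorial : ℝ)/((q-1).factorial : ℝ)) * Hr 4 p) * (∑ k ∈ range (n+1), tk q n k)
        + ∑ k ∈ range (n+1), ∑ i ∈ range k,
            (((q-n).factorial : ℝ)/((q-1).factorial : ℝ)) * tk q n k * (1/((p:ℝ)+(i:ℝ)+1)^4) := hL1
    _ = ∑ k ∈ range (n+1), ∑ i ∈ range k,
            (((q-n).factorial : ℝ)/((q-1).factorial : ℝ)) * tk q n k * (1/((p:ℝ)+(i:ℝ)+1)^4) := by
        rw [vanish q n hn1 hqn]; ring
    _ = ∑ j ∈ range (n+1), ∑ k ∈ Finset.Ico (j+1) (n+1),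
            (((q-n).factorial : ℝ)/((q-1).factorial : ℝ)) * tk q n k * (1/((p:ℝ)+(j:ℝ)+1)^4) := hswap
    _ = ∑ j ∈ range n, ∑ k ∈ Finset.Ico (j+1) (n+1),
            (((q-n).factorial : ℝ)/((q-1).factorial : ℝ)) * tk q n k * (1/((p:ℝ)+(j:ℝ)+1)^4) := by
        rw [Finset.sum_range_succ]
        simp
    _ = ∑ j ∈ range n, ((-1:ℝ)^(n+1) * Acoef q n j / ((n:ℝ) * ((q.choose n : ℕ):ℝ)))
          * (1/((p:ℝ)+(j:ℝ)+1)^4) := Finset.sum_congr rfl hperj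
    _ = _ := hRHS.symm
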